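/- If ζ₀ ∉ hull(m) with witnessing sector S, and ζ₀ + u ∈ hull(m), then for every negative real multiple u' of u, the point ζ₀ + u' is not in hull(m). Concretely: if e^{-ζ₀t}m(t) decays like e^{-ε|t|} on a sector S and this fails for ζ₀+u on every subsector of S, then Re(u t) ≤ 0 for all directions t in S, hence for u' = -λu with λ > 0, e^{-(ζ₀+u')t}m(t) is rapidly decreasing on S. -/

import Mathlib

open Complex

/-- `f` is rapidly decreasing in some open sector of directions going to infinity. -/
def RapidlyDecreasingInASector (f : ℂ → ℂ) : Prop :=
  ∃ θ₁ θ₂ : ℝ, θ₁ < θ₂ ∧ ∃ ε > (0 : ℝ), ∃ R : ℝ, ∀ s θ : ℝ,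
    R ≤ s → θ₁ < θ → θ < θ₂ →
      ‖f ((s : ℂ) * Complex.exp ((θ : ℂ) * Complex.I))‖ ≤ Real.exp (-ε * s)

/-- The hull of `m`. -/
def hullSet (m : ℂ → ℂ) : Set ℂ :=
  {ζ : ℂ | ¬ RapidlyDecreasingInASector (fun t => Complex.exp (-ζ * t) * m t)}

/-- If `e^{-ζ₀ t} m(t)` decays like `e^{-ε|t|}` on a sector `S = (θ₁,θ₂)` while
`ζ₀ + u` belongs to the hull of `m` (no sector of rapid decrease at all), then
`Re (u·t) ≤ 0` for all directions `t` in `S`, and consequently for every negative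
real multiple `u' = -λ u` (λ > 0) the point `ζ₀ + u' = ζ₀ - λu` is not in the hull:
`e^{-(ζ₀+u')t} m(t)` is rapidly decreasing (on the sector `S`). -/
theorem hull_negative_multiple (m : ℂ → ℂ) (hm : Differentiable ℂ m) (C a : ℝ)
    (hC : 0 < C) (ha : 0 < a)
    (hbound : ∀ t : ℂ, ‖m t‖ ≤ C * Real.exp (a * ‖t‖))
    (ζ₀ u : ℂ) (θ₁ θ₂ : ℝ) (hθ : θ₁ < θ₂) (ε : ℝ) (hε : 0 < ε) (R : ℝ)
    (hdecay : ∀ s θ : ℝ, R ≤ s → θ₁ < θ → θ < θ₂ →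
      ‖Complex.exp (-ζ₀ * ((s : ℂ) * Complex.exp ((θ : ℂ) * Complex.I))) *
        m ((s : ℂ) * Complex.exp ((θ : ℂ) * Complex.I))‖ ≤ Real.exp (-ε * s))
    (hu : ζ₀ + u ∈ hullSet m) :
    (∀ θ : ℝ, θ₁ < θ → θ < θ₂ → (u * Complex.exp ((θ : ℂ) * Complex.I)).re ≤ 0) ∧
    ∀ lam : ℝ, 0 < lam → ζ₀ - (lam : ℂ) * u ∉ hullSet m := by
  have key : ∀ (c : ℂ) (α β : ℝ), θ₁ ≤ α → β ≤ θ₂ → α < β →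
      (∀ θ : ℝ, α < θ → θ < β → 0 ≤ (c * Complex.exp ((θ : ℂ) * Complex.I)).re) →
      RapidlyDecreasingInASector (fun t => Complex.exp (-(ζ₀ + c) * t) * m t) := by
    intro c α β hα hβ hαβ hpos
    refine ⟨α, β, hαβ, ε, hε, max R 0, ?_⟩
    intro s θ hs h1 h2
    have hsR : R ≤ s := le_trans (le_max_left _ _) hs
    have hs0 : (0 : ℝ) ≤ s := le_trans (le_max_right _ _) hs
    set t : ℂ := (s : ℂ) * Complex.exp ((θ : ℂ) * Complex.I) with ht
    have hsplit : Complex.exp (-(ζ₀ + c) * t) * m t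
        = Complex.exp (-c * t) * (Complex.exp (-ζ₀ * t) * m t) := by
      have h : -(ζ₀ + c) * t = -c * t + -ζ₀ * t := by ring
      rw [h, Complex.exp_add, mul_assoc]
    change ‖Complex.exp (-(ζ₀ + c) * t) * m t‖ ≤ Real.exp (-ε * s)
    rw [hsplit, norm_mul, Complex.norm_exp]
    have hct : c * t = ((s : ℝ) : ℂ) * (c * Complex.exp ((θ : ℂ) * Complex.I)) := by
      rw [ht]; ring
    have hre : 0 ≤ (c * t).re := by
      rw [hct, Complex.re_ofReal_mul]
      exact mul_nonneg hs0 (hpos θ h1 h2)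
    have h1' : θ₁ < θ := lt_of_le_of_lt hα h1
    have h2' : θ < θ₂ := lt_of_lt_of_le h2 hβ
    calc Real.exp ((-c * t).re) * ‖Complex.exp (-ζ₀ * t) * m t‖
        ≤ 1 * Real.exp (-ε * s) := by
          apply mul_le_mul _ (hdecay s θ hsR h1' h2') (norm_nonneg _) zero_le_one
          rw [Real.exp_le_one_iff]
          simpa using neg_nonpos.2 hre
      _ = Real.exp (-ε * s) := one_mul _
  have partA : ∀ θ : ℝ, θ₁ < θ → θ < θ₂ →
      (u * Complex.exp ((θ : ℂ) * Complex.I)).re ≤ 0 := by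
    intro θ h1 h2
    by_contra hpos
    push_neg at hpos
    apply hu
    have hc : ContinuousAt (fun θ : ℝ => (u * Complex.exp ((θ : ℂ) * Complex.I)).re) θ := by
      fun_prop
    have hnh : (fun θ : ℝ => (u * Complex.exp ((θ : ℂ) * Complex.I)).re) ⁻¹'
        Set.Ioi 0 ∈ nhds θ := hc (Ioi_mem_nhds hpos)
    rw [Metric.mem_nhds_iff] at hnh
    obtain ⟨η, hη, hball⟩ := hnh
    have hαβ : max θ₁ (θ - η) < min θ₂ (θ + η) :=
      lt_trans (max_lt h1 (by linarith)) (lt_min h2 (by linarith))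
    have hrd := key u (max θ₁ (θ - η)) (min θ₂ (θ + η)) (le_max_left _ _)
      (min_le_left _ _) hαβ ?_
    · simpa [hullSet] using hrd
    · intro θ' hθ1 hθ2
      have : θ' ∈ Metric.ball θ η := by
        rw [Real.ball_eq_Ioo]
        constructor
        · exact lt_of_le_of_lt (le_max_right _ _) hθ1
        · exact lt_of_lt_of_le hθ2 (min_le_right _ _)
      exact le_of_lt (hball this)
  refine ⟨partA, ?_⟩
  intro lam hlam hmem
  apply hmem
  have hrd := key (-(lam : ℂ) * u) θ₁ θ₂ le_rfl le_rfl hθ ?_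
  · simpa [sub_eq_add_neg, neg_mul] using hrd
  · intro θ h1 h2
    have hcast : (-(lam : ℂ) * u * Complex.exp ((θ : ℂ) * Complex.I))
        = ((-lam : ℝ) : ℂ) * (u * Complex.exp ((θ : ℂ) * Complex.I)) := by
      push_cast; ring
    rw [hcast, Complex.re_ofReal_mul]
    nlinarith [partA θ h1 h2]
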